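/- Let A ∈ ℝ^{m×n} have full column rank with least-squares solution x ≠ 0 and residual r = b − Ax. For Δx ∈ ℝ^n, define v₁ = (AᵀA)^{-1}Δx, u₂ = −A(AᵀA)^{-1}Δx. Then when Δx is a unit right singular vector of A corresponding to σ_min(A), ‖r‖₂‖v₁‖₂ = ‖r‖₂/σ_min(A)² and ‖u₂‖₂‖x‖₂ = ‖x‖₂/σ_min(A), and these choices maximize ‖r‖₂‖v₁‖₂ and ‖u₂‖₂‖x‖₂ simultaneously over all unit vectors Δx. -/

import Mathlib

open Matrix BigOperators

/-- Euclidean 2-norm of a vector in `ℝ^n`. -/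
noncomputable def enorm2 {n : ℕ} (x : Fin n → ℝ) : ℝ := Real.sqrt (∑ i, x i ^ 2)

/-- Frobenius norm of a real matrix. -/
noncomputable def frobNorm {m n : ℕ} (M : Matrix (Fin m) (Fin n) ℝ) : ℝ :=
  Real.sqrt (∑ i, ∑ j, M i j ^ 2)

/-- The singular values of a real `m × n` matrix: square roots of the eigenvalues of `Aᵀ A`
(for real matrices `Aᴴ = Aᵀ`). -/
noncomputable def singVal {m n : ℕ} (A : Matrix (Fin m) (Fin n) ℝ) (i : Fin n) : ℝ :=
  Real.sqrt ((show (Aᵀ * A).IsHermitian by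
    simpa using Matrix.isHermitian_conjTranspose_mul_self A).eigenvalues i)

/-- Nuclear (trace) norm: the sum of the singular values with multiplicity. -/
noncomputable def nuclearNorm {m n : ℕ} (A : Matrix (Fin m) (Fin n) ℝ) : ℝ :=
  ∑ i, singVal A i

/-- Spectral norm (operator 2-norm): sup of `‖A x‖₂` over Euclidean unit vectors `x`. -/
noncomputable def specNorm {m n : ℕ} (A : Matrix (Fin m) (Fin n) ℝ) : ℝ :=
  sSup {c | ∃ x : Fin n → ℝ, enorm2 x = 1 ∧ c = enorm2 (A.mulVec x)}

/-- Smallest singular value of a real `m × n` matrix. -/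
noncomputable def sigmaMin {m n : ℕ} (A : Matrix (Fin m) (Fin n) ℝ) : ℝ :=
  Real.sqrt (⨅ i : Fin n, (show (Aᵀ * A).IsHermitian by
    simpa using Matrix.isHermitian_conjTranspose_mul_self A).eigenvalues i)

lemma enorm2_eq_sqrt_dot {n : ℕ} (v : Fin n → ℝ) : enorm2 v = Real.sqrt (v ⬝ᵥ v) := by
  simp [enorm2, dotProduct, pow_two]

lemma dot_self_nonneg {n : ℕ} (v : Fin n → ℝ) : 0 ≤ v ⬝ᵥ v :=
  Finset.sum_nonneg fun i _ => mul_self_nonneg _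

lemma enorm2_nonneg {n : ℕ} (v : Fin n → ℝ) : 0 ≤ enorm2 v := Real.sqrt_nonneg _

lemma sq_enorm2 {n : ℕ} (v : Fin n → ℝ) : enorm2 v ^ 2 = v ⬝ᵥ v := by
  rw [enorm2_eq_sqrt_dot, Real.sq_sqrt (dot_self_nonneg v)]

lemma enorm2_smul {n : ℕ} (c : ℝ) (v : Fin n → ℝ) : enorm2 (c • v) = |c| * enorm2 v := by
  rw [enorm2_eq_sqrt_dot, enorm2_eq_sqrt_dot, smul_dotProduct, dotProduct_smul, smul_eq_mul,
    smul_eq_mul, ← mul_assoc, ← pow_two, Real.sqrt_mul (sq_nonneg c), Real.sqrt_sq_eq_abs]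

lemma quad_form_eq {n : ℕ} {M : Matrix (Fin n) (Fin n) ℝ} (hM : M.IsHermitian) (v : Fin n → ℝ) :
    v ⬝ᵥ M *ᵥ v = ∑ i, hM.eigenvalues i * ((star (hM.eigenvectorUnitary : Matrix (Fin n) (Fin n) ℝ) *ᵥ v) i)^2 ∧
    v ⬝ᵥ v = ∑ i, ((star (hM.eigenvectorUnitary : Matrix (Fin n) (Fin n) ℝ) *ᵥ v) i)^2 := by
  set U : Matrix (Fin n) (Fin n) ℝ := (hM.eigenvectorUnitary : Matrix (Fin n) (Fin n) ℝ) with hU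
  set w : Fin n → ℝ := star U *ᵥ v with hw
  have key : ∀ N : Matrix (Fin n) (Fin n) ℝ, v ⬝ᵥ ((U * N * star U) *ᵥ v) = w ⬝ᵥ (N *ᵥ w) := by
    intro N
    rw [← mulVec_mulVec, ← mulVec_mulVec, dotProduct_mulVec]
    congr 1
    rw [hw, star_eq_conjTranspose, conjTranspose_eq_transpose_of_trivial, mulVec_transpose]
  constructor
  · conv_lhs => rw [hM.spectral_theorem, Unitary.conjStarAlgAut_apply]
    rw [key]
    simp [mulVec_diagonal, dotProduct, pow_two, mul_comm, mul_assoc, mul_left_comm]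
  · have h1 : (U : Matrix (Fin n) (Fin n) ℝ) * 1 * star U = 1 := by
      rw [mul_one]
      exact (Matrix.mem_unitaryGroup_iff).mp hM.eigenvectorUnitary.2
    have := key 1
    rw [h1] at this
    simpa [dotProduct, pow_two] using this

lemma rayleigh_lower {n : ℕ} {M : Matrix (Fin n) (Fin n) ℝ} (hM : M.IsHermitian) {c : ℝ}
    (h : ∀ i, c ≤ hM.eigenvalues i) (v : Fin n → ℝ) :
    c * (v ⬝ᵥ v) ≤ v ⬝ᵥ M *ᵥ v := by
  obtain ⟨h1, h2⟩ := quad_form_eq hM v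
  rw [h1, h2, Finset.mul_sum]
  exact Finset.sum_le_sum fun i _ => mul_le_mul_of_nonneg_right (h i) (sq_nonneg _)

/-- When `Δx` is a unit right singular vector of `A` for `σ_min(A)` (a unit eigenvector
of `AᵀA` with eigenvalue `σ_min(A)²`), the quantities `‖r‖₂‖(AᵀA)⁻¹Δx‖₂` and
`‖A(AᵀA)⁻¹Δx‖₂‖x‖₂` attain the values `‖r‖₂/σ_min²` and `‖x‖₂/σ_min`, and these choices
simultaneously maximize both quantities over all unit vectors. -/
theorem maximizing_right_singular_vector {m n : ℕ} (A : Matrix (Fin m) (Fin n) ℝ)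
    (hrank : A.rank = n) (b : Fin m → ℝ)
    (x : Fin n → ℝ) (hx : x = ((Aᵀ * A)⁻¹ * Aᵀ).mulVec b) (hx0 : x ≠ 0)
    (r : Fin m → ℝ) (hr : r = b - A.mulVec x)
    (Δx : Fin n → ℝ) (hΔ : enorm2 Δx = 1)
    (hsing : (Aᵀ * A).mulVec Δx = (sigmaMin A ^ 2) • Δx) :
    enorm2 r * enorm2 ((Aᵀ * A)⁻¹.mulVec Δx) = enorm2 r / sigmaMin A ^ 2 ∧
    enorm2 (A.mulVec ((Aᵀ * A)⁻¹.mulVec Δx)) * enorm2 x = enorm2 x / sigmaMin A ∧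
    ∀ Δy : Fin n → ℝ, enorm2 Δy = 1 →
      enorm2 r * enorm2 ((Aᵀ * A)⁻¹.mulVec Δy)
          ≤ enorm2 r * enorm2 ((Aᵀ * A)⁻¹.mulVec Δx) ∧
      enorm2 (A.mulVec ((Aᵀ * A)⁻¹.mulVec Δy)) * enorm2 x
          ≤ enorm2 (A.mulVec ((Aᵀ * A)⁻¹.mulVec Δx)) * enorm2 x := by
  classical
  have hM : (Aᵀ * A).IsHermitian := by simpa using Matrix.isHermitian_conjTranspose_mul_self A
  have hpsd : (Aᵀ * A).PosSemidef := by
    refine posSemidef_iff_dotProduct_mulVec.mpr ⟨hM, fun v => ?_⟩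
    rw [← mulVec_mulVec, dotProduct_mulVec]
    simp only [star_trivial, vecMul_transpose]
    exact dot_self_nonneg _
  have hnonneg : ∀ i, 0 ≤ hM.eigenvalues i := fun i => hpsd.eigenvalues_nonneg i
  have hrankM : (Aᵀ * A).rank = n := by rw [Matrix.rank_transpose_mul_self, hrank]
  have hpos : ∀ i, 0 < hM.eigenvalues i := by
    intro i
    rcases (hnonneg i).lt_or_eq with h | h
    · exact h
    · exfalso
      have hcard : Fintype.card {j // hM.eigenvalues j ≠ 0} < Fintype.card (Fin n) :=
        Fintype.card_subtype_lt (x := i) (by simp [← h])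
      have h5 := hM.rank_eq_card_non_zero_eigs
      rw [hrankM] at h5
      simp [← h5, Fintype.card_fin] at hcard
  -- n nonzero
  have hn : n ≠ 0 := by
    rintro rfl
    rw [enorm2] at hΔ
    simp at hΔ
  have hne : Nonempty (Fin n) := ⟨⟨0, Nat.pos_of_ne_zero hn⟩⟩
  obtain ⟨i₀, -, hmin⟩ := Finset.exists_min_image Finset.univ hM.eigenvalues
    ⟨hne.some, Finset.mem_univ _⟩
  have hinf : (⨅ i, hM.eigenvalues i) = hM.eigenvalues i₀ :=
    le_antisymm (ciInf_le (Finite.bddBelow_range _) i₀)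
      (le_ciInf fun i => hmin i (Finset.mem_univ i))
  have hinfpos : (0:ℝ) < ⨅ i, hM.eigenvalues i := hinf ▸ hpos i₀
  have hσ2 : sigmaMin A ^ 2 = ⨅ i, hM.eigenvalues i := by
    rw [sigmaMin, Real.sq_sqrt hinfpos.le]
  have hσpos : 0 < sigmaMin A := by
    rw [sigmaMin]; exact Real.sqrt_pos.mpr hinfpos
  set σ := sigmaMin A with hσdef
  set μ := σ ^ 2 with hμdef
  have hμpos : 0 < μ := pow_pos hσpos 2
  have hμle : ∀ i, μ ≤ hM.eigenvalues i := by
    intro i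
    exact hσ2.trans_le (hinf.le.trans (hmin i (Finset.mem_univ i)))
  have hdet : IsUnit (Aᵀ * A).det := by
    rw [isUnit_iff_ne_zero, hM.det_eq_prod_eigenvalues]
    have : (0:ℝ) < ∏ i, hM.eigenvalues i := Finset.prod_pos fun i _ => hpos i
    push_cast
    exact this.ne'
  have hMinv : ∀ v, (Aᵀ * A) *ᵥ ((Aᵀ * A)⁻¹ *ᵥ v) = v := fun v => by
    rw [mulVec_mulVec, Matrix.mul_nonsing_inv _ hdet, one_mulVec]
  have hinvM : ∀ v, (Aᵀ * A)⁻¹ *ᵥ ((Aᵀ * A) *ᵥ v) = v := fun v => by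
    rw [mulVec_mulVec, Matrix.nonsing_inv_mul _ hdet, one_mulVec]
  have hdotA : ∀ u : Fin n → ℝ, (A *ᵥ u) ⬝ᵥ (A *ᵥ u) = u ⬝ᵥ ((Aᵀ * A) *ᵥ u) := by
    intro u
    rw [← mulVec_mulVec]
    conv_rhs => rw [dotProduct_mulVec, vecMul_transpose]
  have hΔdot : Δx ⬝ᵥ Δx = 1 := by rw [← sq_enorm2, hΔ]; norm_num
  have hz : (Aᵀ * A)⁻¹ *ᵥ Δx = μ⁻¹ • Δx := by
    have h1 : (Aᵀ * A)⁻¹ *ᵥ ((Aᵀ * A) *ᵥ Δx) = Δx := hinvM Δx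
    rw [hsing, mulVec_smul] at h1
    calc (Aᵀ * A)⁻¹ *ᵥ Δx = μ⁻¹ • (μ • ((Aᵀ * A)⁻¹ *ᵥ Δx)) := by
          rw [smul_smul, inv_mul_cancel₀ hμpos.ne', one_smul]
      _ = μ⁻¹ • Δx := by rw [h1]
  have henorm2_z : enorm2 ((Aᵀ * A)⁻¹ *ᵥ Δx) = μ⁻¹ := by
    rw [hz, enorm2_smul, hΔ, mul_one, abs_of_pos (inv_pos.mpr hμpos)]
  have hAΔ : enorm2 (A *ᵥ Δx) = σ := by
    rw [enorm2_eq_sqrt_dot, hdotA, hsing, dotProduct_smul, smul_eq_mul, hΔdot, mul_one, hμdef,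
      Real.sqrt_sq hσpos.le]
  have henorm2_Az : enorm2 (A *ᵥ ((Aᵀ * A)⁻¹ *ᵥ Δx)) = σ⁻¹ := by
    rw [hz, mulVec_smul, enorm2_smul, hAΔ, abs_of_pos (inv_pos.mpr hμpos), hμdef]
    field_simp
  refine ⟨?_, ?_, ?_⟩
  · rw [henorm2_z, div_eq_mul_inv]
  · rw [henorm2_Az, div_eq_mul_inv, mul_comm]
  · intro Δy hΔy
    set z : Fin n → ℝ := (Aᵀ * A)⁻¹ *ᵥ Δy with hzdef
    have hMz : (Aᵀ * A) *ᵥ z = Δy := hMinv Δy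
    have hray : μ * (z ⬝ᵥ z) ≤ z ⬝ᵥ ((Aᵀ * A) *ᵥ z) := rayleigh_lower hM hμle z
    have hΔydot : Δy ⬝ᵥ Δy = 1 := by rw [← sq_enorm2, hΔy]; norm_num
    have hcs : z ⬝ᵥ Δy ≤ enorm2 z := by
      have h2 : (z ⬝ᵥ Δy) ^ 2 ≤ (z ⬝ᵥ z) * (Δy ⬝ᵥ Δy) := by
        simpa [dotProduct, pow_two] using
          Finset.sum_mul_sq_le_sq_mul_sq Finset.univ z Δy
      rw [hΔydot, mul_one, ← sq_enorm2] at h2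
      nlinarith [enorm2_nonneg z]
    have hzMz : z ⬝ᵥ ((Aᵀ * A) *ᵥ z) ≤ enorm2 z := by rw [hMz]; exact hcs
    have hzb : enorm2 z ≤ μ⁻¹ := by
      rcases eq_or_lt_of_le (enorm2_nonneg z) with h | h
      · rw [← h]; positivity
      · have h3 : μ * enorm2 z ^ 2 ≤ enorm2 z := by
          rw [sq_enorm2]; exact le_trans hray hzMz
        have h4 : enorm2 z ^ 2 ≤ μ⁻¹ * enorm2 z := by
          calc enorm2 z ^ 2 = μ⁻¹ * (μ * enorm2 z ^ 2) := by field_simp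
            _ ≤ μ⁻¹ * enorm2 z := mul_le_mul_of_nonneg_left h3 (inv_pos.mpr hμpos).le
        nlinarith [h4, h]
    have hAzb : enorm2 (A *ᵥ z) ≤ σ⁻¹ := by
      have h4 : enorm2 (A *ᵥ z) ^ 2 ≤ σ⁻¹ ^ 2 := by
        rw [sq_enorm2, hdotA]
        calc z ⬝ᵥ ((Aᵀ * A) *ᵥ z) ≤ enorm2 z := hzMz
          _ ≤ μ⁻¹ := hzb
          _ = σ⁻¹ ^ 2 := by rw [hμdef]; field_simp
      nlinarith [enorm2_nonneg (A *ᵥ z), inv_pos.mpr hσpos]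
    constructor
    · rw [henorm2_z]
      exact mul_le_mul_of_nonneg_left hzb (enorm2_nonneg r)
    · rw [henorm2_Az]
      exact mul_le_mul_of_nonneg_right hAzb (enorm2_nonneg x)
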